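/- Let n ≥ 3 be an integer, ω > 0 a real number, and define x(u,v) = (-P_n + ω·P_{n-2}, Q_n + ω·Q_{n-2}, (2√(n(n-2)ω)/(n-1))·P_{n-1}), where P_k(u,v) = Re((u+iv)^k) and Q_k(u,v) = Im((u+iv)^k). Then x is harmonic and satisfies the isothermal conditions ⟨x_u, x_u⟩ = ⟨x_v, x_v⟩ and ⟨x_u, x_v⟩ = 0; hence x is a minimal surface. -/

import Mathlib

open Complex

/-- P_k(u,v) = Re((u+iv)^k). -/
noncomputable def Pxy (k : ℕ) (u v : ℝ) : ℝ := (((u : ℂ) + Complex.I * v) ^ k).re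

/-- Q_k(u,v) = Im((u+iv)^k). -/
noncomputable def Qxy (k : ℕ) (u v : ℝ) : ℝ := (((u : ℂ) + Complex.I * v) ^ k).im

/-- The Xu–Wang polynomial surface of degree n with parameter ω. -/
noncomputable def xuWang (n : ℕ) (ω : ℝ) (u v : ℝ) : ℝ × ℝ × ℝ :=
  (-Pxy n u v + ω * Pxy (n - 2) u v,
   Qxy n u v + ω * Qxy (n - 2) u v,
   2 * Real.sqrt ((n : ℝ) * ((n : ℝ) - 2) * ω) / ((n : ℝ) - 1) * Pxy (n - 1) u v)

/-- Euclidean dot product on ℝ³ (as ℝ × ℝ × ℝ). -/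
def dot3 (p q : ℝ × ℝ × ℝ) : ℝ := p.1 * q.1 + p.2.1 * q.2.1 + p.2.2 * q.2.2

lemma hasDerivAt_re' {g : ℝ → ℂ} {g' : ℂ} {x : ℝ} (h : HasDerivAt g g' x) :
    HasDerivAt (fun t => (g t).re) g'.re x :=
  Complex.reCLM.hasFDerivAt.comp_hasDerivAt x h

lemma hasDerivAt_im' {g : ℝ → ℂ} {g' : ℂ} {x : ℝ} (h : HasDerivAt g g' x) :
    HasDerivAt (fun t => (g t).im) g'.im x :=
  Complex.imCLM.hasFDerivAt.comp_hasDerivAt x h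

lemma core_u (k : ℕ) (u v : ℝ) :
    HasDerivAt (fun t : ℝ => ((t : ℂ) + Complex.I * v) ^ k)
      ((k : ℂ) * ((u : ℂ) + Complex.I * v) ^ (k - 1)) u := by
  have h : HasDerivAt (fun w : ℂ => (w + Complex.I * v) ^ k)
      ((k : ℂ) * ((u : ℂ) + Complex.I * v) ^ (k - 1) * 1) (u : ℂ) :=
    HasDerivAt.comp (u : ℂ) (hasDerivAt_pow k ((u : ℂ) + Complex.I * v))
      ((hasDerivAt_id (u : ℂ)).add_const _)
  simpa using h.comp_ofReal

lemma core_v (k : ℕ) (u v : ℝ) :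
    HasDerivAt (fun t : ℝ => ((u : ℂ) + Complex.I * t) ^ k)
      ((k : ℂ) * ((u : ℂ) + Complex.I * v) ^ (k - 1) * Complex.I) v := by
  have hg : HasDerivAt (fun t : ℝ => (u : ℂ) + Complex.I * t) Complex.I v := by
    have : HasDerivAt (fun t : ℝ => (t : ℂ)) 1 v := Complex.ofRealCLM.hasDerivAt
    simpa using (this.const_mul Complex.I).const_add (u : ℂ)
  exact HasDerivAt.comp v (hasDerivAt_pow k ((u : ℂ) + Complex.I * v)) hg

lemma hPu (k : ℕ) (u v : ℝ) :
    HasDerivAt (fun t => Pxy k t v) ((k : ℝ) * Pxy (k - 1) u v) u := by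
  have := hasDerivAt_re' (core_u k u v)
  simpa [Pxy, Complex.mul_re] using this

lemma hQu (k : ℕ) (u v : ℝ) :
    HasDerivAt (fun t => Qxy k t v) ((k : ℝ) * Qxy (k - 1) u v) u := by
  have := hasDerivAt_im' (core_u k u v)
  simpa [Pxy, Qxy, Complex.mul_im] using this

lemma hPv (k : ℕ) (u v : ℝ) :
    HasDerivAt (fun t => Pxy k u t) (-((k : ℝ) * Qxy (k - 1) u v)) v := by
  have := hasDerivAt_re' (core_v k u v)
  simpa [Pxy, Qxy, Complex.mul_re, Complex.mul_im] using this

lemma hQv (k : ℕ) (u v : ℝ) :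
    HasDerivAt (fun t => Qxy k u t) ((k : ℝ) * Pxy (k - 1) u v) v := by
  have := hasDerivAt_im' (core_v k u v)
  simpa [Pxy, Qxy, Complex.mul_re, Complex.mul_im] using this

lemma hXu (n : ℕ) (ω : ℝ) (u v : ℝ) :
    HasDerivAt (fun t => xuWang n ω t v)
      (-((n : ℝ) * Pxy (n - 1) u v) + ω * ((↑(n - 2) : ℝ) * Pxy (n - 2 - 1) u v),
       (n : ℝ) * Qxy (n - 1) u v + ω * ((↑(n - 2) : ℝ) * Qxy (n - 2 - 1) u v),
       2 * Real.sqrt ((n : ℝ) * ((n : ℝ) - 2) * ω) / ((n : ℝ) - 1) *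
         ((↑(n - 1) : ℝ) * Pxy (n - 1 - 1) u v)) u := by
  simp only [xuWang]
  exact ((hPu n u v).neg.add ((hPu (n - 2) u v).const_mul ω)).prodMk
    (((hQu n u v).add ((hQu (n - 2) u v).const_mul ω)).prodMk ((hPu (n - 1) u v).const_mul _))

lemma hXv (n : ℕ) (ω : ℝ) (u v : ℝ) :
    HasDerivAt (fun t => xuWang n ω u t)
      (- -((n : ℝ) * Qxy (n - 1) u v) + ω * -((↑(n - 2) : ℝ) * Qxy (n - 2 - 1) u v),
       (n : ℝ) * Pxy (n - 1) u v + ω * ((↑(n - 2) : ℝ) * Pxy (n - 2 - 1) u v),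
       2 * Real.sqrt ((n : ℝ) * ((n : ℝ) - 2) * ω) / ((n : ℝ) - 1) *
         -((↑(n - 1) : ℝ) * Qxy (n - 1 - 1) u v)) v := by
  simp only [xuWang]
  exact ((hPv n u v).neg.add ((hPv (n - 2) u v).const_mul ω)).prodMk
    (((hQv n u v).add ((hQv (n - 2) u v).const_mul ω)).prodMk ((hPv (n - 1) u v).const_mul _))

/-- the Xu–Wang surface of degree n ≥ 3 with parameter ω > 0
is harmonic and satisfies the isothermal conditions ⟨x_u,x_u⟩ = ⟨x_v,x_v⟩
and ⟨x_u,x_v⟩ = 0, hence is a minimal surface. -/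
theorem xu_wang_minimal (n : ℕ) (hn : 3 ≤ n) (ω : ℝ) (hω : 0 < ω) :
    (∀ u v : ℝ,
      deriv (fun s => deriv (fun t => xuWang n ω t v) s) u
        + deriv (fun s => deriv (fun t => xuWang n ω u t) s) v = 0)
    ∧ (∀ u v : ℝ,
      dot3 (deriv (fun t => xuWang n ω t v) u) (deriv (fun t => xuWang n ω t v) u)
        = dot3 (deriv (fun t => xuWang n ω u t) v) (deriv (fun t => xuWang n ω u t) v)
      ∧ dot3 (deriv (fun t => xuWang n ω t v) u) (deriv (fun t => xuWang n ω u t) v) = 0) := by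
  set Cc : ℝ := 2 * Real.sqrt ((n : ℝ) * ((n : ℝ) - 2) * ω) / ((n : ℝ) - 1) with hCc
  constructor
  · intro u v
    have e1 : (fun s => deriv (fun t => xuWang n ω t v) s)
        = fun s => (-((n : ℝ) * Pxy (n - 1) s v) + ω * ((↑(n - 2) : ℝ) * Pxy (n - 2 - 1) s v),
            (n : ℝ) * Qxy (n - 1) s v + ω * ((↑(n - 2) : ℝ) * Qxy (n - 2 - 1) s v),
            Cc * ((↑(n - 1) : ℝ) * Pxy (n - 1 - 1) s v)) :=
      funext fun s => (hXu n ω s v).deriv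
    have e2 : (fun s => deriv (fun t => xuWang n ω u t) s)
        = fun s => (- -((n : ℝ) * Qxy (n - 1) u s) + ω * -((↑(n - 2) : ℝ) * Qxy (n - 2 - 1) u s),
            (n : ℝ) * Pxy (n - 1) u s + ω * ((↑(n - 2) : ℝ) * Pxy (n - 2 - 1) u s),
            Cc * -((↑(n - 1) : ℝ) * Qxy (n - 1 - 1) u s)) :=
      funext fun s => (hXv n ω u s).deriv
    rw [e1, e2]
    have d1 : HasDerivAt
        (fun s => (-((n : ℝ) * Pxy (n - 1) s v) + ω * ((↑(n - 2) : ℝ) * Pxy (n - 2 - 1) s v),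
            (n : ℝ) * Qxy (n - 1) s v + ω * ((↑(n - 2) : ℝ) * Qxy (n - 2 - 1) s v),
            Cc * ((↑(n - 1) : ℝ) * Pxy (n - 1 - 1) s v)))
        (-((n : ℝ) * ((↑(n - 1) : ℝ) * Pxy (n - 1 - 1) u v))
            + ω * ((↑(n - 2) : ℝ) * ((↑(n - 2 - 1) : ℝ) * Pxy (n - 2 - 1 - 1) u v)),
         (n : ℝ) * ((↑(n - 1) : ℝ) * Qxy (n - 1 - 1) u v)
            + ω * ((↑(n - 2) : ℝ) * ((↑(n - 2 - 1) : ℝ) * Qxy (n - 2 - 1 - 1) u v)),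
         Cc * ((↑(n - 1) : ℝ) * ((↑(n - 1 - 1) : ℝ) * Pxy (n - 1 - 1 - 1) u v))) u :=
      (((hPu (n - 1) u v).const_mul ((n : ℝ))).neg.add
          (((hPu (n - 2 - 1) u v).const_mul _).const_mul ω)).prodMk
        ((((hQu (n - 1) u v).const_mul ((n : ℝ))).add
            (((hQu (n - 2 - 1) u v).const_mul _).const_mul ω)).prodMk
          (((hPu (n - 1 - 1) u v).const_mul _).const_mul Cc))
    have d2 : HasDerivAt
        (fun s => (- -((n : ℝ) * Qxy (n - 1) u s) + ω * -((↑(n - 2) : ℝ) * Qxy (n - 2 - 1) u s),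
            (n : ℝ) * Pxy (n - 1) u s + ω * ((↑(n - 2) : ℝ) * Pxy (n - 2 - 1) u s),
            Cc * -((↑(n - 1) : ℝ) * Qxy (n - 1 - 1) u s)))
        (- -((n : ℝ) * ((↑(n - 1) : ℝ) * Pxy (n - 1 - 1) u v))
            + ω * -((↑(n - 2) : ℝ) * ((↑(n - 2 - 1) : ℝ) * Pxy (n - 2 - 1 - 1) u v)),
         (n : ℝ) * -((↑(n - 1) : ℝ) * Qxy (n - 1 - 1) u v)
            + ω * ((↑(n - 2) : ℝ) * -((↑(n - 2 - 1) : ℝ) * Qxy (n - 2 - 1 - 1) u v)),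
         Cc * -((↑(n - 1) : ℝ) * ((↑(n - 1 - 1) : ℝ) * Pxy (n - 1 - 1 - 1) u v))) v :=
      ((((hQv (n - 1) u v).const_mul ((n : ℝ))).neg.neg.add
          (((hQv (n - 2 - 1) u v).const_mul _).neg.const_mul ω)).prodMk
        ((((hPv (n - 1) u v).const_mul ((n : ℝ))).add
            (((hPv (n - 2 - 1) u v).const_mul _).const_mul ω)).prodMk
          (((hQv (n - 1 - 1) u v).const_mul _).neg.const_mul Cc)))
    rw [d1.deriv, d2.deriv]
    simp only [Prod.mk_add_mk, Prod.mk_eq_zero]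
    refine ⟨by ring, by ring, by ring⟩
  · intro u v
    rw [(hXu n ω u v).deriv, (hXv n ω u v).deriv]
    have h3 : (3 : ℝ) ≤ (n : ℝ) := by exact_mod_cast hn
    have hn1 : ((n - 1 : ℕ) : ℝ) = (n : ℝ) - 1 := by
      rw [Nat.cast_sub (by omega)]; norm_num
    have hn2 : ((n - 2 : ℕ) : ℝ) = (n : ℝ) - 2 := by
      rw [Nat.cast_sub (by omega)]; norm_num
    have hpos : 0 ≤ (n : ℝ) * ((n : ℝ) - 2) * ω :=
      mul_nonneg (mul_nonneg (by linarith) (by linarith)) hω.le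
    have hne : (n : ℝ) - 1 ≠ 0 := by intro h; linarith
    have hC : (Cc * ((n - 1 : ℕ) : ℝ)) ^ 2 = 4 * (n : ℝ) * ((n - 2 : ℕ) : ℝ) * ω := by
      rw [hCc, hn1, hn2]
      rw [div_mul_cancel₀ _ hne]
      rw [mul_pow, Real.sq_sqrt hpos]; ring
    have key : ((u : ℂ) + Complex.I * v) ^ (n - 1) * ((u : ℂ) + Complex.I * v) ^ (n - 2 - 1)
        = ((u : ℂ) + Complex.I * v) ^ (n - 1 - 1) * ((u : ℂ) + Complex.I * v) ^ (n - 1 - 1) := by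
      rw [← pow_add, ← pow_add]
      congr 1
      omega
    have h1 : Pxy (n - 1) u v * Pxy (n - 2 - 1) u v - Qxy (n - 1) u v * Qxy (n - 2 - 1) u v
        = Pxy (n - 1 - 1) u v * Pxy (n - 1 - 1) u v
          - Qxy (n - 1 - 1) u v * Qxy (n - 1 - 1) u v := by
      simpa [Pxy, Qxy, Complex.mul_re] using congrArg Complex.re key
    have h2 : Pxy (n - 1) u v * Qxy (n - 2 - 1) u v + Qxy (n - 1) u v * Pxy (n - 2 - 1) u v
        = Pxy (n - 1 - 1) u v * Qxy (n - 1 - 1) u v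
          + Qxy (n - 1 - 1) u v * Pxy (n - 1 - 1) u v := by
      simpa [Pxy, Qxy, Complex.mul_im] using congrArg Complex.im key
    constructor
    · simp only [dot3]
      linear_combination (-(4 * (n : ℝ) * ω * ((n - 2 : ℕ) : ℝ))) * h1
        + (Pxy (n - 1 - 1) u v ^ 2 - Qxy (n - 1 - 1) u v ^ 2) * hC
    · simp only [dot3]
      linear_combination (2 * (n : ℝ) * ω * ((n - 2 : ℕ) : ℝ)) * h2
        + (-(Pxy (n - 1 - 1) u v * Qxy (n - 1 - 1) u v)) * hC
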